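/- Every n-vertex graph admitting a layered ℓ-separator (for some layering) has queue-number at most 3ℓ · log₂ n. -/

import Mathlib

/-- `lay` is a layering of `G`: every edge joins vertices in the same layer
or in consecutive layers. -/
def IsLayering {V : Type*} (G : SimpleGraph V) (lay : V → ℕ) : Prop :=
  ∀ u v : V, G.Adj u v →
    lay u = lay v ∨ lay u + 1 = lay v ∨ lay v + 1 = lay u

/-- `G` has a layered `ℓ`-separator with respect to the layering `lay`: every
subgraph `G'` of `G` contains a set `S` with at most `ℓ` vertices in each layer
such that every connected component of `G' − S` has at most `|V(G')| / 2`
vertices. -/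
def HasLayeredSeparator {V : Type*} (G : SimpleGraph V) (lay : V → ℕ) (ℓ : ℕ) : Prop :=
  ∀ G' : G.Subgraph, ∃ S ⊆ G'.verts,
    (∀ i : ℕ, (S ∩ {v | lay v = i}).ncard ≤ ℓ) ∧
    ∀ c : ((G'.deleteVerts S).coe).ConnectedComponent,
      2 * c.supp.ncard ≤ G'.verts.ncard

/-- `G` has a stack layout with `s` stacks: an injective position function on
the vertices and an assignment of the edges to `s` stacks such that no two
edges in the same stack cross. -/
def HasStackLayout {V : Type*} (G : SimpleGraph V) (s : ℕ) : Prop :=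
  ∃ (pos : V → ℕ) (f : Sym2 V → ℕ), Function.Injective pos ∧
    (∀ v w : V, G.Adj v w → f s(v, w) < s) ∧
    (∀ v w x y : V, G.Adj v w → G.Adj x y → f s(v, w) = f s(x, y) →
      ¬ (pos v < pos x ∧ pos x < pos w ∧ pos w < pos y))

/-- `G` has a queue layout with `q` queues: an injective position function on
the vertices and an assignment of the edges to `q` queues such that no two
edges in the same queue nest. -/
def HasQueueLayout {V : Type*} (G : SimpleGraph V) (q : ℕ) : Prop :=
  ∃ (pos : V → ℕ) (f : Sym2 V → ℕ), Function.Injective pos ∧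
    (∀ v w : V, G.Adj v w → f s(v, w) < q) ∧
    (∀ v w x y : V, G.Adj v w → G.Adj x y → f s(v, w) = f s(x, y) →
      ¬ (pos v < pos x ∧ pos x < pos y ∧ pos y < pos w))

lemma lex_ext {p q : List ℕ} (h : List.Lex (·<·) p q) (hlen : p.length = q.length) :
    ∀ {p' q' : List ℕ}, p <+: p' → q <+: q' → List.Lex (·<·) p' q' := by
  induction h with
  | nil => simp at hlen
  | @cons a l1 l2 h ih =>
    intro p' q' hp hq
    obtain ⟨s, rfl⟩ := hp
    obtain ⟨t, rfl⟩ := hq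
    exact List.Lex.cons (ih (by simpa using hlen) (List.prefix_append _ _) (List.prefix_append _ _))
  | @rel a l1 b l2 hab =>
    intro p' q' hp hq
    obtain ⟨s, rfl⟩ := hp
    obtain ⟨t, rfl⟩ := hq
    exact List.Lex.rel hab

lemma digits_unique {ℓ a1 a2 b1 b2 c1 c2 : ℕ} (ha1 : a1 < 3) (ha2 : a2 < 3)
    (hb1 : b1 < ℓ) (hb2 : b2 < ℓ)
    (h : a1 + 3 * b1 + 3 * ℓ * c1 = a2 + 3 * b2 + 3 * ℓ * c2) :
    a1 = a2 ∧ b1 = b2 ∧ c1 = c2 := by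
  have h3 : a1 + 3 * (b1 + ℓ * c1) = a2 + 3 * (b2 + ℓ * c2) := by ring_nf; ring_nf at h; linarith
  have ha : a1 = a2 := by
    have := congrArg (· % 3) h3
    simpa [Nat.add_mul_mod_self_left, Nat.mod_eq_of_lt ha1, Nat.mod_eq_of_lt ha2] using this
  subst ha
  have h4 : b1 + ℓ * c1 = b2 + ℓ * c2 := by omega
  have hb : b1 = b2 := by
    have := congrArg (· % ℓ) h4
    simpa [Nat.add_mul_mod_self_left, Nat.mod_eq_of_lt hb1, Nat.mod_eq_of_lt hb2] using this
  subst hb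
  have hl : 0 < ℓ := Nat.pos_of_ne_zero (by omega)
  exact ⟨rfl, rfl, by
    have : ℓ * c1 = ℓ * c2 := by omega
    exact Nat.eq_of_mul_eq_mul_left hl this⟩

lemma exists_decomp {V : Type*} [Fintype V] (G : SimpleGraph V) (ℓ : ℕ) (lay : V → ℕ)
    (hsep : HasLayeredSeparator G lay ℓ) :
    ∀ n : ℕ, ∀ A : Set V, A.ncard ≤ n →
    ∃ (path : V → List ℕ) (rank : V → ℕ),
      (∀ v ∈ A, rank v < ℓ) ∧
      (∀ v ∈ A, ∀ w ∈ A, lay v = lay w → path v = path w → rank v = rank w → v = w) ∧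
      (∀ v ∈ A, ∀ w ∈ A, G.Adj v w → path v <+: path w ∨ path w <+: path v) ∧
      (∀ p : List ℕ, 2 ^ p.length * {u | u ∈ A ∧ p <+: path u}.ncard ≤ A.ncard) := by
  intro n
  induction n using Nat.strong_induction_on with
  | _ n IH =>
  intro A hA
  classical
  rcases Nat.eq_zero_or_pos n with rfl | hn
  · have hAe : A = ∅ := by
      rw [← Set.ncard_eq_zero (Set.toFinite A)]; omega
    subst hAe
    refine ⟨fun _ => [], fun _ => 0, by simp, by simp, by simp, fun p => ?_⟩
    have : {u | u ∈ (∅ : Set V) ∧ p <+: []} = ∅ := by simp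
    simp [this]
  -- main case
  set G' := (⊤ : G.Subgraph).induce A with hG'
  obtain ⟨S, hSA, hSl, hScomp⟩ := hsep G'
  have hSA' : S ⊆ A := hSA
  -- the rank function on S
  have hrankS : ∃ g : V → ℕ, (∀ v ∈ S, g v < ℓ) ∧
      ∀ v ∈ S, ∀ w ∈ S, lay v = lay w → g v = g w → v = w := by
    have hstep : ∀ i : ℕ, ∃ gi : V → ℕ,
        (∀ v ∈ S ∩ {x | lay x = i}, gi v < ℓ) ∧ Set.InjOn gi (S ∩ {x | lay x = i}) := by
      intro i
      set T : Set V := S ∩ {x | lay x = i} with hT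
      have hTfin : Finite T := Set.toFinite T
      have e := Finite.equivFin T
      have hcard : Nat.card T = T.ncard := Nat.card_coe_set_eq T
      have hTl : T.ncard ≤ ℓ := hSl i
      refine ⟨fun v => if h : v ∈ T then (e ⟨v, h⟩).val else 0, ?_, ?_⟩
      · intro v hv
        simp only [dif_pos hv]
        have := (e ⟨v, hv⟩).isLt
        omega
      · intro v hv w hw hvw
        simp only [dif_pos hv, dif_pos hw] at hvw
        exact congrArg Subtype.val (e.injective (Fin.val_injective hvw))
    choose gi h1 h2 using hstep
    refine ⟨fun v => gi (lay v) v, fun v hv => h1 (lay v) v ⟨hv, rfl⟩, ?_⟩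
    intro v hv w hw hl heq
    dsimp only at heq
    rw [hl] at heq
    exact h2 (lay w) ⟨hv, hl⟩ ⟨hw, rfl⟩ heq
  obtain ⟨g, hg1, hg2⟩ := hrankS
  -- components
  set K := ((G'.deleteVerts S).coe).ConnectedComponent with hK
  obtain ⟨idx, hidx⟩ : ∃ f : K → ℕ, Function.Injective f :=
    (countable_iff_exists_injective _).1 inferInstance
  set cmp : ∀ v, v ∈ A \ S → K := fun v h =>
    SimpleGraph.connectedComponentMk _ (⟨v, h⟩ : ((G'.deleteVerts S).verts)) with hcmp
  set B : K → Set V := fun c => Subtype.val '' c.supp with hB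
  have hBsub : ∀ c, B c ⊆ A \ S := by
    rintro c x ⟨⟨y, hy⟩, _, rfl⟩; exact hy
  have hmemB : ∀ v (h : v ∈ A \ S), v ∈ B (cmp v h) := by
    intro v h
    exact ⟨⟨v, h⟩, by rw [SimpleGraph.ConnectedComponent.mem_supp_iff], rfl⟩
  have hmemB' : ∀ c v, v ∈ B c → ∃ h : v ∈ A \ S, cmp v h = c := by
    rintro c v ⟨⟨v', hv'⟩, hsupp, rfl⟩
    exact ⟨hv', (SimpleGraph.ConnectedComponent.mem_supp_iff _ _).1 hsupp⟩
  have hBsize : ∀ c, (B c).ncard ≤ n / 2 := by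
    intro c
    have h1 : (B c).ncard = c.supp.ncard := Set.ncard_image_of_injective _ Subtype.val_injective
    have h2 := hScomp c
    have h3 : G'.verts.ncard = A.ncard := rfl
    omega
  have hIH : ∀ c : K, ∃ (path : V → List ℕ) (rank : V → ℕ),
      (∀ v ∈ B c, rank v < ℓ) ∧
      (∀ v ∈ B c, ∀ w ∈ B c, lay v = lay w → path v = path w → rank v = rank w → v = w) ∧
      (∀ v ∈ B c, ∀ w ∈ B c, G.Adj v w → path v <+: path w ∨ path w <+: path v) ∧
      (∀ p : List ℕ, 2 ^ p.length * {u | u ∈ B c ∧ p <+: path u}.ncard ≤ (B c).ncard) :=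
    fun c => IH (n / 2) (by omega) (B c) (hBsize c)
  choose pf rf hf1 hf2 hf3 hf4 using hIH
  refine ⟨fun v => if h : v ∈ A \ S then idx (cmp v h) :: pf (cmp v h) v else [],
          fun v => if h : v ∈ A \ S then rf (cmp v h) v else g v, ?_, ?_, ?_, ?_⟩
  · -- rank bound
    intro v hv
    by_cases h : v ∈ A \ S
    · simp only [dif_pos h]; exact hf1 _ v (hmemB v h)
    · simp only [dif_neg h]
      have hvS : v ∈ S := by by_contra hc; exact h ⟨hv, hc⟩
      exact hg1 v hvS
  · -- injectivity
    intro v hv w hw hl hp hr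
    by_cases h1 : v ∈ A \ S <;> by_cases h2 : w ∈ A \ S
    · simp only [dif_pos h1, dif_pos h2] at hp hr
      simp only [List.cons.injEq] at hp
      obtain ⟨hi, ht⟩ := hp
      have hc : cmp v h1 = cmp w h2 := hidx hi
      rw [← hc] at ht hr
      exact hf2 _ v (hmemB v h1) w (hc ▸ hmemB w h2) hl ht hr
    · simp only [dif_pos h1, dif_neg h2] at hp
      exact absurd hp (by simp)
    · simp only [dif_neg h1, dif_pos h2] at hp
      exact absurd hp (by simp)
    · simp only [dif_neg h1, dif_neg h2] at hr
      have hvS : v ∈ S := by by_contra hc; exact h1 ⟨hv, hc⟩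
      have hwS : w ∈ S := by by_contra hc; exact h2 ⟨hw, hc⟩
      exact hg2 v hvS w hwS hl hr
  · -- adjacency
    intro v hv w hw hadj
    by_cases h1 : v ∈ A \ S
    · by_cases h2 : w ∈ A \ S
      · have hc : cmp v h1 = cmp w h2 := by
          apply SimpleGraph.ConnectedComponent.sound
          apply SimpleGraph.Adj.reachable
          rw [SimpleGraph.Subgraph.coe_adj]
          rw [SimpleGraph.Subgraph.deleteVerts_adj]
          refine ⟨hv, h1.2, hw, h2.2, ?_⟩
          exact ⟨hv, hw, hadj⟩
        rcases hf3 _ v (hmemB v h1) w (hc ▸ hmemB w h2) hadj with hpre | hpre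
        · left
          simp only [dif_pos h1, dif_pos h2]
          rw [List.cons_prefix_cons]
          exact ⟨congrArg idx hc, hc ▸ hpre⟩
        · right
          simp only [dif_pos h1, dif_pos h2]
          rw [List.cons_prefix_cons]
          exact ⟨(congrArg idx hc).symm, by rw [← hc]; exact hpre⟩
      · right; simp only [dif_neg h2]; exact List.nil_prefix
    · left; simp only [dif_neg h1]; exact List.nil_prefix
  · -- sizes
    intro p
    match p with
    | [] =>
      have hset : {u | u ∈ A ∧ [] <+: (if h : u ∈ A \ S then idx (cmp u h) :: pf (cmp u h) u else [])} = A := by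
        ext u; simp [List.nil_prefix]
      rw [hset]; simp
    | j :: p' =>
      by_cases hc : ∃ c : K, idx c = j
      · obtain ⟨c, rfl⟩ := hc
        have hset : {u | u ∈ A ∧ (idx c :: p') <+: (if h : u ∈ A \ S then idx (cmp u h) :: pf (cmp u h) u else [])}
            = {u | u ∈ B c ∧ p' <+: pf c u} := by
          ext u
          simp only [Set.mem_setOf_eq]
          constructor
          · rintro ⟨huA, hpre⟩
            by_cases h : u ∈ A \ S
            · rw [dif_pos h, List.cons_prefix_cons] at hpre
              have hcc : cmp u h = c := (hidx hpre.1).symm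
              exact ⟨hcc ▸ hmemB u h, hcc ▸ hpre.2⟩
            · rw [dif_neg h] at hpre
              exact absurd (List.prefix_nil.1 hpre) (by simp)
          · rintro ⟨huB, hpre⟩
            obtain ⟨h, hcc⟩ := hmemB' c u huB
            refine ⟨h.1, ?_⟩
            rw [dif_pos h, List.cons_prefix_cons]
            exact ⟨congrArg idx hcc.symm, hcc ▸ hpre⟩
        rw [hset]
        have hrec := hf4 c p'
        have h2B : 2 * (B c).ncard ≤ A.ncard := by
          have h1 : (B c).ncard = c.supp.ncard := Set.ncard_image_of_injective _ Subtype.val_injective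
          have h2 := hScomp c
          have h3 : G'.verts.ncard = A.ncard := rfl
          omega
        calc 2 ^ (idx c :: p').length * {u | u ∈ B c ∧ p' <+: pf c u}.ncard
            = 2 * (2 ^ p'.length * {u | u ∈ B c ∧ p' <+: pf c u}.ncard) := by
              simp [List.length_cons, pow_succ]; ring
          _ ≤ 2 * (B c).ncard := by omega
          _ ≤ A.ncard := h2B
      · have hset : {u | u ∈ A ∧ (j :: p') <+: (if h : u ∈ A \ S then idx (cmp u h) :: pf (cmp u h) u else [])} = ∅ := by
          ext u
          simp only [Set.mem_setOf_eq, Set.mem_empty_iff_false, iff_false, not_and]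
          intro huA hpre
          by_cases h : u ∈ A \ S
          · rw [dif_pos h, List.cons_prefix_cons] at hpre
            exact hc ⟨cmp u h, hpre.1.symm⟩
          · rw [dif_neg h] at hpre
            exact absurd (List.prefix_nil.1 hpre) (by simp)
        rw [hset]; simp
lemma main_layout {V : Type*} [Fintype V] (G : SimpleGraph V) (ℓ : ℕ) (lay : V → ℕ)
    (hlay : IsLayering G lay)
    (path : V → List ℕ) (rank : V → ℕ)
    (Q1 : ∀ v : V, rank v < ℓ)
    (Q2 : ∀ v w : V, lay v = lay w → path v = path w → rank v = rank w → v = w)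
    (Q3 : ∀ v w : V, G.Adj v w → path v <+: path w ∨ path w <+: path v)
    (Q4 : ∀ v w : V, G.Adj v w → path v <+: path w →
      (path v).length + 1 ≤ Nat.log 2 (Fintype.card V)) :
    HasQueueLayout G (3 * ℓ * Nat.log 2 (Fintype.card V)) := by
  classical
  set D := Nat.log 2 (Fintype.card V) with hD
  set k : V → List ℕ := fun u => path u ++ [rank u] with hk
  set key : V → ℕ ×ₗ List ℕ := fun u => toLex (lay u, k u) with hkey
  have hkinj : Function.Injective key := by
    intro u u' h
    have h' : (lay u, k u) = (lay u', k u') := h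
    have h1 : lay u = lay u' := congrArg Prod.fst h'
    have h2 : k u = k u' := congrArg Prod.snd h'
    rw [hk] at h2
    simp only at h2
    have hlen : (path u).length = (path u').length := by
      have := congrArg List.length h2
      simp at this; omega
    obtain ⟨hp, hr⟩ := List.append_inj h2 (by omega)
    exact Q2 u u' h1 hp (by simpa using hr)
  set pos : V → ℕ := fun u => (Finset.univ.filter (fun z => key z < key u)).card with hpos
  have hposlt : ∀ {u u'}, key u < key u' → pos u < pos u' := by
    intro u u' h
    apply Finset.card_lt_card
    refine ⟨fun z hz => ?_, fun hcon => ?_⟩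
    · simp only [Finset.mem_filter] at hz ⊢
      exact ⟨hz.1, lt_trans hz.2 h⟩
    · have : u ∈ Finset.univ.filter (fun z => key z < key u) :=
        hcon (by simp [h])
      simp at this
  have hposrev : ∀ {u u'}, pos u < pos u' → key u < key u' := by
    intro u u' h
    rcases lt_trichotomy (key u) (key u') with h1 | h1 | h1
    · exact h1
    · exact absurd (congrArg pos (hkinj h1)) (by omega)
    · exact absurd (hposlt h1) (by omega)
  have hposinj : Function.Injective pos := by
    intro u u' h
    rcases lt_trichotomy (key u) (key u') with h1 | h1 | h1
    · exact absurd (hposlt h1) (by omega)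
    · exact hkinj h1
    · exact absurd (hposlt h1) (by omega)
  have hposbd : ∀ u, pos u ≤ Fintype.card V := fun u =>
    le_trans (Finset.card_filter_le _ _) (by simp)
  -- lay/lex helpers
  have hlayle : ∀ {u u'}, key u < key u' → lay u ≤ lay u' := by
    intro u u' h
    rcases Prod.Lex.lt_iff.1 h with h1 | h1
    · exact le_of_lt h1
    · exact le_of_eq h1.1
  have hsame : ∀ {u u'}, key u < key u' → lay u = lay u' → List.Lex (·<·) (k u) (k u') := by
    intro u u' h hl
    rcases Prod.Lex.lt_iff.1 h with h1 | h1
    · change lay u < lay u' at h1; omega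
    · exact h1.2
  -- anchor machinery
  set N := Fintype.card V + 1 with hN
  set m : V → ℕ := fun u => (path u).length * N + pos u with hm
  have hmlen : ∀ {u u'}, m u ≤ m u' → (path u).length ≤ (path u').length := by
    intro u u' h
    by_contra hcon
    push_neg at hcon
    have h1 : ((path u').length + 1) * N ≤ (path u).length * N :=
      Nat.mul_le_mul_right _ (by omega)
    have h2 := hposbd u
    have h3 := hposbd u'
    simp only [hm] at h
    have h4 : ((path u').length + 1) * N = (path u').length * N + N := by ring
    omega
  have hminj : Function.Injective m := by
    intro u u' h
    simp only [hm] at h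
    have h2 := hposbd u
    have h3 := hposbd u'
    have : pos u = pos u' := by
      rcases Nat.lt_trichotomy (path u).length (path u').length with h1 | h1 | h1
      · have := Nat.mul_le_mul_right N (show (path u).length + 1 ≤ (path u').length by omega)
        have h4 : ((path u).length + 1) * N = (path u).length * N + N := by ring
        omega
      · rw [h1] at h; omega
      · have := Nat.mul_le_mul_right N (show (path u').length + 1 ≤ (path u).length by omega)
        have h4 : ((path u').length + 1) * N = (path u').length * N + N := by ring
        omega
    exact hposinj this
  set enc : V → V → ℕ := fun a b => (lay b + 1 - lay a) + 3 * rank a + 3 * ℓ * (path a).length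
    with henc
  set F : V → V → ℕ := fun v w => if m v ≤ m w then enc v w else enc w v with hF
  have hFsymm : ∀ v w, F v w = F w v := by
    intro v w
    by_cases h1 : m v ≤ m w <;> by_cases h2 : m w ≤ m v
    · have : v = w := hminj (le_antisymm h1 h2)
      subst this; rfl
    · simp only [hF, if_pos h1, if_neg h2]
    · simp only [hF, if_neg h1, if_pos h2]
    · omega
  have hanchor : ∀ v w : V, G.Adj v w → ∃ a b : V,
      ((a = v ∧ b = w) ∨ (a = w ∧ b = v)) ∧ F v w = enc a b ∧ path a <+: path b ∧ G.Adj a b := by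
    intro v w hadj
    by_cases h : m v ≤ m w
    · refine ⟨v, w, Or.inl ⟨rfl, rfl⟩, by simp [hF, if_pos h], ?_, hadj⟩
      rcases Q3 v w hadj with hp | hp
      · exact hp
      · have := hmlen h
        have := hp.length_le
        have : path w = path v := hp.eq_of_length (by omega)
        rw [← this]
    · refine ⟨w, v, Or.inr ⟨rfl, rfl⟩, by simp [hF, if_neg h], ?_, hadj.symm⟩
      rcases Q3 v w hadj with hp | hp
      · have := hmlen (le_of_not_ge h)
        have := hp.length_le
        have : path v = path w := hp.eq_of_length (by omega)
        rw [← this]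
      · exact hp
  have hoffbd : ∀ a b : V, G.Adj a b → lay b + 1 - lay a < 3 := by
    intro a b hadj
    rcases hlay a b hadj with h | h | h <;> omega
  refine ⟨pos, Sym2.lift ⟨F, hFsymm⟩, hposinj, ?_, ?_⟩
  · -- bound
    intro v w hadj
    show F v w < 3 * ℓ * D
    obtain ⟨a, b, _, hFab, hpab, hadjab⟩ := hanchor v w hadj
    rw [hFab]
    have h1 : rank a < ℓ := Q1 a
    have h2 : lay b + 1 - lay a < 3 := hoffbd a b hadjab
    have h3 : (path a).length + 1 ≤ D := Q4 a b hadjab hpab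
    have h4 : 3 * ℓ * (path a).length + 3 * ℓ ≤ 3 * ℓ * D := by
      calc 3 * ℓ * (path a).length + 3 * ℓ = 3 * ℓ * ((path a).length + 1) := by ring
        _ ≤ 3 * ℓ * D := Nat.mul_le_mul_left _ h3
    simp only [henc]
    omega
  · -- non-nesting
    intro v w x y hvw hxy hfeq
    rintro ⟨hp1, hp2, hp3⟩
    have hfeq' : F v w = F x y := hfeq
    obtain ⟨a, b, hab, hFab, hpab, hadjab⟩ := hanchor v w hvw
    obtain ⟨c, d, hcd, hFcd, hpcd, hadjcd⟩ := hanchor x y hxy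
    have hencq : enc a b = enc c d := by rw [← hFab, ← hFcd, hfeq']
    obtain ⟨hoff, hrank, hlen⟩ := digits_unique (hoffbd a b hadjab) (hoffbd c d hadjcd)
      (Q1 a) (Q1 c) hencq
    have kc1 : key v < key x := hposrev hp1
    have kc2 : key x < key y := hposrev hp2
    have kc3 : key y < key w := hposrev hp3
    have l1 : lay v ≤ lay x := hlayle kc1
    have l2 : lay x ≤ lay y := hlayle kc2
    have l3 : lay y ≤ lay w := hlayle kc3
    have e_vw := hlay v w hvw
    have e_xy := hlay x y hxy
    -- distinctness
    have hvx : v ≠ x := fun h => absurd (congrArg key h) (ne_of_lt kc1)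
    have hyw : y ≠ w := fun h => absurd (congrArg key h) (ne_of_lt kc3)
    have hvy : v ≠ y := fun h => absurd (congrArg key h) (ne_of_lt (lt_trans kc1 kc2))
    have hxw : x ≠ w := fun h => absurd (congrArg key h) (ne_of_lt (lt_trans kc2 kc3))
    -- layer identification
    have hlays : lay v = lay x ∧ lay y = lay w ∧ lay a = lay c := by
      rcases hab with ⟨ha, hb⟩ | ⟨ha, hb⟩ <;> rcases hcd with ⟨hc, hd⟩ | ⟨hc, hd⟩ <;>
      · have e1 := congrArg lay ha
        have e2 := congrArg lay hb
        have e3 := congrArg lay hc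
        have e4 := congrArg lay hd
        omega
    -- prefixes
    have hprefk : ∀ u : V, path u <+: k u := fun u => List.prefix_append _ _
    have hexta : path a <+: path v ∧ path a <+: path w := by
      rcases hab with ⟨ha, hb⟩ | ⟨ha, hb⟩
      · rw [← ha, ← hb]; exact ⟨List.prefix_rfl, hpab⟩
      · rw [← ha, ← hb]; exact ⟨hpab, List.prefix_rfl⟩
    have hextc : path c <+: path x ∧ path c <+: path y := by
      rcases hcd with ⟨hc, hd⟩ | ⟨hc, hd⟩
      · rw [← hc, ← hd]; exact ⟨List.prefix_rfl, hpcd⟩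
      · rw [← hc, ← hd]; exact ⟨hpcd, List.prefix_rfl⟩
    have lex1 : List.Lex (·<·) (k v) (k x) := hsame kc1 hlays.1
    have lex2 : List.Lex (·<·) (k y) (k w) := hsame kc3 hlays.2.1
    -- path identification
    have hpac : path a = path c := by
      by_contra hne
      rcases lt_trichotomy (path a) (path c) with h | h | h
      · have hcon : List.Lex (·<·) (k w) (k y) :=
          lex_ext h hlen (hexta.2.trans (hprefk w)) (hextc.2.trans (hprefk y))
        exact absurd (show (k w) < (k y) from hcon) (lt_asymm (show (k y) < (k w) from lex2))
      · exact hne h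
      · have hcon : List.Lex (·<·) (k x) (k v) :=
          lex_ext h hlen.symm (hextc.1.trans (hprefk x)) (hexta.1.trans (hprefk v))
        exact absurd (show (k x) < (k v) from hcon) (lt_asymm (show (k v) < (k x) from lex1))
    have hac : a = c := Q2 a c hlays.2.2 hpac hrank
    rcases hab with ⟨ha, _⟩ | ⟨ha, _⟩ <;> rcases hcd with ⟨hc, _⟩ | ⟨hc, _⟩
    · exact hvx (by rw [← ha, ← hc]; exact hac)
    · exact hvy (by rw [← ha, ← hc]; exact hac)
    · exact hxw (by rw [← hc, ← ha]; exact hac.symm)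
    · exact hyw (by rw [← hc, ← ha]; exact hac.symm)

/-- Every `n`-vertex graph admitting a layered `ℓ`-separator has queue-number
at most `3ℓ · log₂ n`. -/
theorem queue_number_layered_separator {V : Type*} [Fintype V]
    (G : SimpleGraph V) (ℓ : ℕ) (lay : V → ℕ)
    (hlay : IsLayering G lay) (hsep : HasLayeredSeparator G lay ℓ) :
    ∃ q : ℕ, HasQueueLayout G q ∧
      (q : ℝ) ≤ 3 * ℓ * Real.logb 2 (Fintype.card V) := by
  classical
  obtain ⟨path, rank, P1, P2, P3, P4⟩ := exists_decomp G ℓ lay hsep (Fintype.card V) Set.univ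
    (by rw [Set.ncard_univ, Nat.card_eq_fintype_card])
  have Q1 : ∀ v : V, rank v < ℓ := fun v => P1 v (Set.mem_univ v)
  have Q2 : ∀ v w : V, lay v = lay w → path v = path w → rank v = rank w → v = w :=
    fun v w => P2 v (Set.mem_univ v) w (Set.mem_univ w)
  have Q3 : ∀ v w : V, G.Adj v w → path v <+: path w ∨ path w <+: path v :=
    fun v w => P3 v (Set.mem_univ v) w (Set.mem_univ w)
  have Q4 : ∀ v w : V, G.Adj v w → path v <+: path w →
      (path v).length + 1 ≤ Nat.log 2 (Fintype.card V) := by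
    intro v w hadj hpre
    have hsub : ({v, w} : Set V) ⊆ {u | u ∈ Set.univ ∧ path v <+: path u} := by
      rintro z (rfl | rfl)
      · exact ⟨Set.mem_univ _, List.prefix_rfl⟩
      · exact ⟨Set.mem_univ _, hpre⟩
    have h2 : 2 ≤ {u | u ∈ Set.univ ∧ path v <+: path u}.ncard := by
      rw [← Set.ncard_pair (G.ne_of_adj hadj)]
      exact Set.ncard_le_ncard hsub (Set.toFinite _)
    have h4 := P4 (path v)
    rw [Set.ncard_univ, Nat.card_eq_fintype_card] at h4
    have hpow : 2 ^ ((path v).length + 1) ≤ Fintype.card V := by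
      calc 2 ^ ((path v).length + 1) = 2 ^ (path v).length * 2 := by rw [pow_succ]
        _ ≤ 2 ^ (path v).length * {u | u ∈ Set.univ ∧ path v <+: path u}.ncard :=
            Nat.mul_le_mul_left _ h2
        _ ≤ Fintype.card V := h4
    have hcard : Fintype.card V ≠ 0 := by
      have : Nonempty V := ⟨v⟩
      exact Fintype.card_ne_zero
    exact (Nat.le_log_iff_pow_le (by norm_num) hcard).2 hpow
  refine ⟨3 * ℓ * Nat.log 2 (Fintype.card V),
    main_layout G ℓ lay hlay path rank Q1 Q2 Q3 Q4, ?_⟩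
  have hlog : (Nat.log 2 (Fintype.card V) : ℝ) ≤ Real.logb 2 (Fintype.card V) := by
    simpa using Real.natLog_le_logb (Fintype.card V) 2
  have h0 : (0 : ℝ) ≤ 3 * (ℓ : ℝ) := by positivity
  push_cast
  calc 3 * (ℓ : ℝ) * (Nat.log 2 (Fintype.card V) : ℝ)
      ≤ 3 * (ℓ : ℝ) * Real.logb 2 (Fintype.card V) := mul_le_mul_of_nonneg_left hlog h0
    _ = 3 * ℓ * Real.logb 2 (Fintype.card V) := by ring
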